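/- arXiv:math/0611365 — 7 statements merged into one kernel-verified Lean document; each statement's English description precedes it below -/
import Mathlib

section
/- For every irrational α ∈ (0,1) and every positive integer n, ∑_{w ∈ F_n(c_α)} h(w) = B_α(n) + (n+1)⌊nα⌋ + 1. -/
/-- The characteristic word with slope `α`: `c_α(n) = ⌊(n+2)α⌋ - ⌊(n+1)α⌋`. -/
noncomputable def cword (α : ℝ) (n : ℕ) : ℤ :=
  ⌊((n : ℝ) + 2) * α⌋ - ⌊((n : ℝ) + 1) * α⌋

/-- The set of factors of length `n` of a word `W : ℕ → ℤ`. -/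
def factorSet (W : ℕ → ℤ) (n : ℕ) : Set (Fin n → ℤ) :=
  {v | ∃ i : ℕ, ∀ j : Fin n, v j = W (i + j)}

/-- The height of a finite word: the number of components equal to 1. -/
def height {n : ℕ} (w : Fin n → ℤ) : ℕ :=
  (Finset.univ.filter (fun j : Fin n => w j = 1)).card

/-- `B α k` counts the integers `q` with `1 ≤ q < k` such that `{qα} < {kα}`. -/
noncomputable def B (α : ℝ) (k : ℕ) : ℕ :=
  ((Finset.Ico 1 k).filter (fun q : ℕ => Int.fract ((q : ℝ) * α) < Int.fract ((k : ℝ) * α))).card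

open Finset


noncomputable def thr (α : ℝ) (j : ℕ) : ℝ := 1 - Int.fract ((j : ℝ) * α)

noncomputable def Wd (α : ℝ) (n : ℕ) (x : ℝ) : Fin n → ℤ :=
  fun j => ⌊x + ((j : ℕ) + 1 : ℝ) * α⌋ - ⌊x + ((j : ℕ) : ℝ) * α⌋

lemma floor_split (α : ℝ) {x : ℝ} (hx0 : 0 ≤ x) (hx1 : x < 1) (j : ℕ) :
    ⌊x + (j : ℝ) * α⌋ = ⌊(j : ℝ) * α⌋ + (if thr α j ≤ x then 1 else 0) := by
  have h0 := Int.fract_nonneg ((j : ℝ) * α)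
  have h1 := Int.fract_lt_one ((j : ℝ) * α)
  have key : ⌊x + (j : ℝ) * α⌋ = ⌊x + Int.fract ((j : ℝ) * α)⌋ + ⌊(j : ℝ) * α⌋ := by
    conv_lhs => rw [show x + (j : ℝ) * α
      = (x + Int.fract ((j : ℝ) * α)) + (⌊(j : ℝ) * α⌋ : ℤ) by rw [Int.fract]; push_cast; ring]
    rw [Int.floor_add_intCast]
  rw [key]
  by_cases h : thr α j ≤ x
  · rw [if_pos h]
    have : ⌊x + Int.fract ((j : ℝ) * α)⌋ = 1 := by
      apply Int.floor_eq_iff.mpr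
      refine ⟨?_, ?_⟩ <;> push_cast <;> unfold thr at h <;> linarith
    omega
  · rw [if_neg h]
    have : ⌊x + Int.fract ((j : ℝ) * α)⌋ = 0 := by
      apply Int.floor_eq_iff.mpr
      push_neg at h; unfold thr at h
      refine ⟨?_, ?_⟩ <;> push_cast <;> linarith
    omega

lemma tele (α : ℝ) (n : ℕ) (x : ℝ) :
    ∑ j : Fin n, Wd α n x j = ⌊x + (n : ℝ) * α⌋ - ⌊x⌋ := by
  have h1 : ∑ j : Fin n, Wd α n x j
      = ∑ k ∈ Finset.range n, (⌊x + ((k : ℝ) + 1) * α⌋ - ⌊x + (k : ℝ) * α⌋) := by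
    rw [← Fin.sum_univ_eq_sum_range (fun k : ℕ => ⌊x + ((k : ℝ) + 1) * α⌋ - ⌊x + (k : ℝ) * α⌋) n]
    rfl
  rw [h1]
  have := Finset.sum_range_sub (fun k : ℕ => ⌊x + (k : ℝ) * α⌋) n
  simp only [Nat.cast_add, Nat.cast_one] at this ⊢
  rw [this]
  simp

lemma floor_eq_zero_of (x : ℝ) (hx0 : 0 ≤ x) (hx1 : x < 1) : ⌊x⌋ = 0 :=
  Int.floor_eq_zero_iff.mpr ⟨hx0, hx1⟩

/-- Characterization of equal words. -/
lemma word_eq_iff (α : ℝ) (n : ℕ) {x y : ℝ} (hx0 : 0 ≤ x) (hx1 : x < 1)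
    (hy0 : 0 ≤ y) (hy1 : y < 1) :
    Wd α n x = Wd α n y ↔ ∀ j ∈ Finset.Icc 1 n, (thr α j ≤ x ↔ thr α j ≤ y) := by
  have hfx : ∀ j : ℕ, ⌊x + (j : ℝ) * α⌋ = ⌊(j : ℝ) * α⌋ + (if thr α j ≤ x then 1 else 0) :=
    floor_split α hx0 hx1
  have hfy : ∀ j : ℕ, ⌊y + (j : ℝ) * α⌋ = ⌊(j : ℝ) * α⌋ + (if thr α j ≤ y then 1 else 0) :=
    floor_split α hy0 hy1
  constructor
  · intro h j hj
    simp only [Finset.mem_Icc] at hj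
    -- floors equal at every index up to n via telescoping partial sums
    have floors : ∀ k : ℕ, k ≤ n → ⌊x + (k : ℝ) * α⌋ = ⌊y + (k : ℝ) * α⌋ := by
      intro k hk
      have hsum : ∀ z : ℝ, ∑ i ∈ Finset.range k,
          (⌊z + ((i : ℝ) + 1) * α⌋ - ⌊z + (i : ℝ) * α⌋) = ⌊z + (k : ℝ) * α⌋ - ⌊z⌋ := by
        intro z
        have := Finset.sum_range_sub (fun i : ℕ => ⌊z + (i : ℝ) * α⌋) k
        simp only [Nat.cast_add, Nat.cast_one] at this ⊢
        rw [this]; simp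
      have hterm : ∀ i ∈ Finset.range k,
          (⌊x + ((i : ℝ) + 1) * α⌋ - ⌊x + (i : ℝ) * α⌋)
            = (⌊y + ((i : ℝ) + 1) * α⌋ - ⌊y + (i : ℝ) * α⌋) := by
        intro i hi
        have hi' : i < n := lt_of_lt_of_le (Finset.mem_range.mp hi) hk
        have := congrFun h ⟨i, hi'⟩
        simpa [Wd] using this
      have := Finset.sum_congr rfl hterm
      rw [hsum x, hsum y] at this
      rw [floor_eq_zero_of x hx0 hx1, floor_eq_zero_of y hy0 hy1] at this
      omega
    have := floors j hj.2
    rw [hfx j, hfy j] at this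
    by_cases h1 : thr α j ≤ x <;> by_cases h2 : thr α j ≤ y <;>
      simp [h1, h2] at this ⊢
  · intro h
    funext j
    have hk : ∀ k : ℕ, k ≤ n → ⌊x + (k : ℝ) * α⌋ = ⌊y + (k : ℝ) * α⌋ := by
      intro k hk
      rcases Nat.eq_zero_or_pos k with rfl | hkpos
      · simp [floor_eq_zero_of x hx0 hx1, floor_eq_zero_of y hy0 hy1]
      · have := h k (Finset.mem_Icc.mpr ⟨hkpos, hk⟩)
        rw [hfx k, hfy k]
        by_cases h1 : thr α k ≤ x <;> by_cases h2 : thr α k ≤ y <;>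
          simp [h1, h2] at this ⊢
    have h1 := hk j (le_of_lt j.isLt)
    have h2 := hk (j + 1) j.isLt
    simp only [Wd]
    push_cast at h2 ⊢
    omega

/-- The factor of `cword α` of length `n` starting at `i` equals `Wd` at `fract ((i+1)α)`. -/
lemma factor_eq_Wd (α : ℝ) (n : ℕ) (i : ℕ) :
    (fun j : Fin n => cword α (i + (j : ℕ))) = Wd α n (Int.fract (((i : ℝ) + 1) * α)) := by
  funext j
  have hfloor : ∀ c : ℝ, ⌊Int.fract (((i : ℝ) + 1) * α) + c⌋
      = ⌊((i : ℝ) + 1) * α + c⌋ - ⌊((i : ℝ) + 1) * α⌋ := by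
    intro c
    rw [Int.fract]
    rw [show ((i : ℝ) + 1) * α - ⌊((i : ℝ) + 1) * α⌋ + c
      = (((i : ℝ) + 1) * α + c) + (-⌊((i : ℝ) + 1) * α⌋ : ℤ) by push_cast; ring]
    rw [Int.floor_add_intCast]; push_cast; ring
  simp only [Wd, cword, hfloor]
  have e1 : ((i : ℝ) + 1) * α + ((j : ℕ) + 1 : ℝ) * α = ((i + (j : ℕ) : ℕ) + 2 : ℝ) * α := by
    push_cast; ring
  have e2 : ((i : ℝ) + 1) * α + ((j : ℕ) : ℝ) * α = ((i + (j : ℕ) : ℕ) + 1 : ℝ) * α := by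
    push_cast; ring
  rw [e1, e2]; ring

lemma fract_pos_of_irrational {x : ℝ} (h : Irrational x) : 0 < Int.fract x := by
  rcases lt_or_eq_of_le (Int.fract_nonneg x) with h' | h'
  · exact h'
  · exfalso
    have : x = (⌊x⌋ : ℝ) := by have := h'.symm; rw [Int.fract] at this; linarith
    exact h.ne_int ⌊x⌋ this

lemma irr_nat_mul {α : ℝ} (hα : Irrational α) {m : ℕ} (hm : m ≠ 0) :
    Irrational ((m : ℝ) * α) := by
  have := hα.natCast_mul hm
  simpa using this

/-- fract values at distinct positive multiples are distinct. -/
lemma fract_mul_inj {α : ℝ} (hα : Irrational α) {i j : ℕ}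
    (h : Int.fract ((i : ℝ) * α) = Int.fract ((j : ℝ) * α)) : i = j := by
  by_contra hne
  have hirr : Irrational (((j : ℤ) - (i : ℤ) : ℤ) * α) := by
    apply hα.intCast_mul; omega
  apply hirr.ne_int (⌊(j : ℝ) * α⌋ - ⌊(i : ℝ) * α⌋)
  rw [Int.fract, Int.fract] at h
  push_cast
  linarith

lemma stepS {a b δ : ℝ} (ha : 0 ≤ a) (hδ : 0 < δ) (hd : δ < b - a) :
    ∃ l : ℕ, 1 ≤ l ∧ a < l * δ ∧ (l : ℝ) * δ < b := by
  refine ⟨⌊a / δ⌋.toNat + 1, by omega, ?_, ?_⟩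
  · have h1 : (⌊a / δ⌋.toNat : ℝ) + 1 > a / δ := by
      have := Int.lt_floor_add_one (a / δ)
      have hnn : (0:ℤ) ≤ ⌊a / δ⌋ := Int.floor_nonneg.mpr (by positivity)
      have : ((⌊a / δ⌋.toNat : ℤ) : ℝ) = (⌊a / δ⌋ : ℝ) := by
        congr 1; omega
      push_cast at this ⊢
      nlinarith [Int.lt_floor_add_one (a / δ)]
    have := (div_lt_iff₀ hδ).mp h1
    push_cast
    linarith
  · have h2 : (⌊a / δ⌋.toNat : ℝ) ≤ a / δ := by
      have hnn : (0:ℤ) ≤ ⌊a / δ⌋ := Int.floor_nonneg.mpr (by positivity)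
      have h3 : ((⌊a / δ⌋.toNat : ℤ) : ℝ) = (⌊a / δ⌋ : ℝ) := by congr 1; omega
      have := Int.floor_le (a / δ)
      push_cast at h3 ⊢
      linarith
    have := (le_div_iff₀ hδ).mp h2
    push_cast
    nlinarith

/-- Density of the forward orbit of an irrational rotation. -/
lemma dense_orbit {α : ℝ} (hα : Irrational α) {a b : ℝ} (ha : 0 ≤ a) (hab : a < b)
    (hb : b ≤ 1) :
    ∃ m : ℕ, 1 ≤ m ∧ a < Int.fract ((m : ℝ) * α) ∧ Int.fract ((m : ℝ) * α) < b := by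
  set ε : ℝ := (b - a) / 2 with hε
  have hε0 : 0 < ε := by simp [hε]; linarith
  have hεhalf : ε ≤ 1 / 2 := by simp [hε]; linarith
  -- Dirichlet
  obtain ⟨N, hN⟩ := exists_nat_gt (1 / ε)
  have hN0 : 0 < N := by
    by_contra h
    push_neg at h
    interval_cases N
    · simp at hN; nlinarith [one_div_pos.mpr hε0]
  obtain ⟨j, k, hk0, hkN, hjk⟩ := Real.exists_int_int_abs_mul_sub_le α hN0
  have hsmall : |(k : ℝ) * α - j| < ε := by
    have h1 : (1 : ℝ) / (N + 1) < ε := by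
      rw [div_lt_iff₀ (by positivity)]
      rw [div_lt_iff₀ hε0] at hN
      nlinarith
    linarith [hjk]
  set m₀ : ℕ := k.toNat with hm₀
  have hm₀1 : 1 ≤ m₀ := by omega
  have hm₀k : ((m₀ : ℕ) : ℝ) = (k : ℝ) := by
    have : (m₀ : ℤ) = k := Int.toNat_of_nonneg hk0.le
    exact_mod_cast this
  have hfl := Int.floor_le ((k : ℝ) * α)
  have hlt := Int.lt_floor_add_one ((k : ℝ) * α)
  have habs := abs_lt.mp hsmall
  have hirrk : Irrational ((k : ℝ) * α) := by
    rw [← hm₀k]; exact irr_nat_mul hα (by omega)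
  have hfrpos : 0 < Int.fract ((k : ℝ) * α) := fract_pos_of_irrational hirrk
  have hfrlt : Int.fract ((k : ℝ) * α) < 1 := Int.fract_lt_one _
  have hfract : Int.fract ((k : ℝ) * α) = (k : ℝ) * α - ⌊(k : ℝ) * α⌋ := rfl
  have hj : j = ⌊(k : ℝ) * α⌋ ∨ j = ⌊(k : ℝ) * α⌋ + 1 := by
    have h1 : (⌊(k : ℝ) * α⌋ : ℝ) - 1 < (j : ℝ) := by linarith
    have h2 : (j : ℝ) < (⌊(k : ℝ) * α⌋ : ℝ) + 2 := by linarith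
    have h1' : ⌊(k : ℝ) * α⌋ - 1 < j := by exact_mod_cast h1
    have h2' : j < ⌊(k : ℝ) * α⌋ + 2 := by exact_mod_cast h2
    omega
  have hεba : ε < b - a := by rw [hε]; linarith
  rcases hj with hj | hj
  · -- fract(kα) is small
    have hδj : Int.fract ((k : ℝ) * α) = (k : ℝ) * α - (j : ℝ) := by
      rw [hfract, hj]
    have hδε : Int.fract ((k : ℝ) * α) < ε := by
      rw [hδj]
      calc (k : ℝ) * α - j ≤ |(k : ℝ) * α - j| := le_abs_self _
        _ < ε := hsmall
    obtain ⟨l, hl1, hla, hlb⟩ := stepS ha hfrpos (lt_trans hδε hεba)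
    refine ⟨l * m₀, Nat.one_le_iff_ne_zero.mpr (by positivity), ?_, ?_⟩ <;>
    · have hkey : ((l * m₀ : ℕ) : ℝ) * α
          = (l : ℝ) * Int.fract ((k : ℝ) * α) + ((l * j : ℤ) : ℝ) := by
        rw [hδj]; push_cast [hm₀k]; ring
      have heq : Int.fract (((l * m₀ : ℕ) : ℝ) * α) = (l : ℝ) * Int.fract ((k : ℝ) * α) := by
        rw [hkey, Int.fract_add_intCast, Int.fract_eq_self.mpr ⟨by linarith, by linarith⟩]
      rw [heq]
      first | exact hla | exact hlb
  · -- fract(kα) is close to 1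
    have hη0 : 0 < 1 - Int.fract ((k : ℝ) * α) := by linarith
    have hηj : 1 - Int.fract ((k : ℝ) * α) = (j : ℝ) - (k : ℝ) * α := by
      rw [hfract, hj]; push_cast; ring
    have hηε : 1 - Int.fract ((k : ℝ) * α) < ε := by
      rw [hηj]
      calc (j : ℝ) - (k : ℝ) * α ≤ |(k : ℝ) * α - j| := by
            rw [abs_sub_comm]; exact le_abs_self _
        _ < ε := hsmall
    obtain ⟨l, hl1, hla, hlb⟩ := stepS (a := 1 - b) (b := 1 - a) (by linarith) hη0 (by linarith)
    have hlη0 : 0 < (l : ℝ) * (1 - Int.fract ((k : ℝ) * α)) := by positivity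
    have hlη1 : (l : ℝ) * (1 - Int.fract ((k : ℝ) * α)) < 1 := by linarith
    refine ⟨l * m₀, Nat.one_le_iff_ne_zero.mpr (by positivity), ?_, ?_⟩ <;>
    · have hkey : ((l * m₀ : ℕ) : ℝ) * α
          = -((l : ℝ) * (1 - Int.fract ((k : ℝ) * α))) + ((l * j : ℤ) : ℝ) := by
        push_cast [hm₀k]
        linear_combination (l : ℝ) * hηj
      have hfr_self : Int.fract ((l : ℝ) * (1 - Int.fract ((k : ℝ) * α)))
          = (l : ℝ) * (1 - Int.fract ((k : ℝ) * α)) :=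
        Int.fract_eq_self.mpr ⟨hlη0.le, hlη1⟩
      have heq : Int.fract (((l * m₀ : ℕ) : ℝ) * α)
          = 1 - (l : ℝ) * (1 - Int.fract ((k : ℝ) * α)) := by
        rw [hkey, Int.fract_add_intCast, Int.fract_neg (by rw [hfr_self]; exact hlη0.ne'), hfr_self]
      rw [heq]
      first | linarith | linarith

theorem stmt_2 (α : ℝ) (hα : Irrational α) (h0 : 0 < α) (h1 : α < 1)
    (n : ℕ) (hn : 1 ≤ n) :
    (∑ᶠ w ∈ factorSet (cword α) n, (height w : ℤ)) =
      (B α n : ℤ) + ((n : ℤ) + 1) * ⌊(n : ℝ) * α⌋ + 1 := by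
  classical
  have hthr_mem : ∀ j ∈ Finset.Icc 1 n, 0 < thr α j ∧ thr α j < 1 := by
    intro j hj
    simp only [Finset.mem_Icc] at hj
    have hirr : Irrational ((j : ℝ) * α) := irr_nat_mul hα (by omega)
    have hp := fract_pos_of_irrational hirr
    have hq := Int.fract_lt_one ((j : ℝ) * α)
    unfold thr
    constructor <;> linarith
  set T : Finset ℝ := (Finset.Icc 1 n).image (thr α) with hT
  set S : Finset ℝ := insert 0 T with hS
  have hTmem : ∀ y ∈ T, 0 < y ∧ y < 1 := by
    intro y hy
    rw [hT] at hy
    obtain ⟨j, hj, rfl⟩ := Finset.mem_image.mp hy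
    exact hthr_mem j hj
  have h0T : (0 : ℝ) ∉ T := fun h => absurd (hTmem 0 h).1 (lt_irrefl 0)
  have hSmem : ∀ y ∈ S, 0 ≤ y ∧ y < 1 := by
    intro y hy
    rcases Finset.mem_insert.mp hy with rfl | hy
    · exact ⟨le_refl 0, one_pos⟩
    · exact ⟨(hTmem y hy).1.le, (hTmem y hy).2⟩
  have hthr_inj : Set.InjOn (thr α) (Finset.Icc 1 n : Finset ℕ) := by
    intro i _ j _ h
    apply fract_mul_inj hα
    unfold thr at h
    linarith
  have hTcard : T.card = n := by
    rw [hT, Finset.card_image_of_injOn hthr_inj, Nat.card_Icc]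
    omega
  have hScard : S.card = n + 1 := by rw [hS, Finset.card_insert_of_notMem h0T, hTcard]
  have hthrT : ∀ j ∈ Finset.Icc 1 n, thr α j ∈ T := by
    intro j hj
    rw [hT]
    exact Finset.mem_image_of_mem _ hj
  -- the factor set is the image of S under Wd
  have hfac : factorSet (cword α) n = ↑(S.image (Wd α n)) := by
    ext v
    simp only [factorSet, Set.mem_setOf_eq, Finset.coe_image, Set.mem_image, Finset.mem_coe]
    constructor
    · rintro ⟨i, hv⟩
      have hv' : v = Wd α n (Int.fract (((i : ℝ) + 1) * α)) := by
        rw [← factor_eq_Wd α n i]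
        funext j
        exact hv j
      set x := Int.fract (((i : ℝ) + 1) * α) with hx
      have hx0 : 0 ≤ x := Int.fract_nonneg _
      have hx1 : x < 1 := Int.fract_lt_one _
      have hne : (S.filter (· ≤ x)).Nonempty :=
        ⟨0, Finset.mem_filter.mpr ⟨Finset.mem_insert_self _ _, hx0⟩⟩
      set x' := (S.filter (· ≤ x)).max' hne with hx'
      have hx'mem := (S.filter (· ≤ x)).max'_mem hne
      have hx'S : x' ∈ S := (Finset.mem_filter.mp hx'mem).1
      have hx'le : x' ≤ x := (Finset.mem_filter.mp hx'mem).2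
      refine ⟨x', hx'S, ?_⟩
      rw [hv']
      apply (word_eq_iff α n (hSmem x' hx'S).1 (hSmem x' hx'S).2 hx0 hx1).mpr
      intro j hj
      constructor
      · intro h
        exact le_trans h hx'le
      · intro h
        have hmem2 : thr α j ∈ S.filter (· ≤ x) :=
          Finset.mem_filter.mpr ⟨Finset.mem_insert_of_mem (hthrT j hj), h⟩
        rw [hx']
        exact Finset.le_max' _ _ hmem2
    · rintro ⟨y, hyS, rfl⟩
      have hy := hSmem y hyS
      have hUne : (insert (1 : ℝ) (T.filter (fun t => y < t))).Nonempty :=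
        ⟨1, Finset.mem_insert_self _ _⟩
      set u := (insert (1 : ℝ) (T.filter (fun t => y < t))).min' hUne with hu
      have hyu : y < u := by
        rw [hu]
        apply (Finset.lt_min'_iff _ _).mpr
        intro z hz
        rcases Finset.mem_insert.mp hz with rfl | hz
        · exact hy.2
        · exact (Finset.mem_filter.mp hz).2
      have hu1 : u ≤ 1 := Finset.min'_le _ 1 (Finset.mem_insert_self _ _)
      obtain ⟨m, hm1, hma, hmb⟩ := dense_orbit hα hy.1 hyu hu1
      set x := Int.fract ((m : ℝ) * α) with hxdef
      have hx0 : 0 ≤ x := Int.fract_nonneg _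
      have hx1 : x < 1 := Int.fract_lt_one _
      have hcast : ((m - 1 : ℕ) : ℝ) + 1 = (m : ℝ) := by
        push_cast [Nat.cast_sub hm1]
        ring
      have hWy : Wd α n y = Wd α n x := by
        apply (word_eq_iff α n hy.1 hy.2 hx0 hx1).mpr
        intro j hj
        constructor
        · intro h
          exact le_of_lt (lt_of_le_of_lt h hma)
        · intro h
          by_contra hc
          push_neg at hc
          have hjT : thr α j ∈ T.filter (fun t => y < t) :=
            Finset.mem_filter.mpr ⟨hthrT j hj, hc⟩
          have : u ≤ thr α j := Finset.min'_le _ _ (Finset.mem_insert_of_mem hjT)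
          linarith
      refine ⟨m - 1, ?_⟩
      intro j
      have hfj := congrFun (factor_eq_Wd α n (m - 1)) j
      rw [hWy]
      rw [hfj, hcast, ← hxdef]
  rw [hfac, finsum_mem_coe_finset]
  have hinj : ∀ x ∈ S, ∀ y ∈ S, Wd α n x = Wd α n y → x = y := by
    intro x hx y hy h
    have hiff := (word_eq_iff α n (hSmem x hx).1 (hSmem x hx).2
      (hSmem y hy).1 (hSmem y hy).2).mp h
    have hxy : x ≤ y ∧ y ≤ x := by
      constructor
      · rcases Finset.mem_insert.mp hx with rfl | hxT
        · exact (hSmem y hy).1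
        · obtain ⟨j, hj, rfl⟩ := Finset.mem_image.mp (hT ▸ hxT)
          exact (hiff j hj).mp (le_refl _)
      · rcases Finset.mem_insert.mp hy with rfl | hyT
        · exact (hSmem x hx).1
        · obtain ⟨j, hj, rfl⟩ := Finset.mem_image.mp (hT ▸ hyT)
          exact (hiff j hj).mpr (le_refl _)
    linarith [hxy.1, hxy.2]
  rw [Finset.sum_image hinj]
  -- compute the height of each representative word
  have hh : ∀ y ∈ S, (height (Wd α n y) : ℤ)
      = ⌊(n : ℝ) * α⌋ + (if thr α n ≤ y then 1 else 0) := by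
    intro y hy
    obtain ⟨hy0, hy1⟩ := hSmem y hy
    have h01 : ∀ j : Fin n, Wd α n y j = 0 ∨ Wd α n y j = 1 := by
      intro j
      have hm1 : ⌊y + ((j : ℕ) : ℝ) * α⌋ ≤ ⌊y + (((j : ℕ) : ℝ) + 1) * α⌋ := by
        apply Int.floor_le_floor
        nlinarith
      have hm2 : ⌊y + (((j : ℕ) : ℝ) + 1) * α⌋ ≤ ⌊y + ((j : ℕ) : ℝ) * α⌋ + 1 := by
        rw [← Int.floor_add_one]
        apply Int.floor_le_floor
        nlinarith
      simp only [Wd]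
      omega
    have hsum : (height (Wd α n y) : ℤ) = ∑ j : Fin n, Wd α n y j := by
      unfold height
      rw [Finset.card_filter]
      push_cast
      apply Finset.sum_congr rfl
      intro j _
      rcases h01 j with h | h <;> simp [h]
    rw [hsum, tele α n y, floor_eq_zero_of y hy0 hy1, floor_split α hy0 hy1 n]
    ring
  rw [Finset.sum_congr rfl hh, Finset.sum_add_distrib, Finset.sum_const, hScard]
  have hcount : (S.filter (fun y => thr α n ≤ y)).card = B α n + 1 := by
    have hthrn_pos : 0 < thr α n := (hthr_mem n (Finset.mem_Icc.mpr ⟨hn, le_refl n⟩)).1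
    have h1' : S.filter (fun y => thr α n ≤ y) = T.filter (fun y => thr α n ≤ y) := by
      rw [hS, Finset.filter_insert, if_neg (by push_neg; exact hthrn_pos)]
    rw [h1', hT, Finset.filter_image,
      Finset.card_image_of_injOn (hthr_inj.mono (by
        intro z hz
        exact Finset.mem_coe.mpr (Finset.filter_subset _ _ (Finset.mem_coe.mp hz))))]
    have h2' : (Finset.Icc 1 n).filter (fun j : ℕ => thr α n ≤ thr α j)
        = (Finset.Icc 1 n).filter
            (fun j : ℕ => Int.fract ((j : ℝ) * α) ≤ Int.fract ((n : ℝ) * α)) := by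
      apply Finset.filter_congr
      intro j _
      unfold thr
      constructor <;> intro h <;> simp at h ⊢ <;> linarith
    rw [h2', ← Finset.Ico_insert_right hn, Finset.filter_insert, if_pos (le_refl _),
      Finset.card_insert_of_notMem (by
        intro hmem
        exact absurd (Finset.mem_of_mem_filter n hmem) (by simp))]
    have h3' : (Finset.Ico 1 n).filter
          (fun j : ℕ => Int.fract ((j : ℝ) * α) ≤ Int.fract ((n : ℝ) * α))
        = (Finset.Ico 1 n).filter
          (fun j : ℕ => Int.fract ((j : ℝ) * α) < Int.fract ((n : ℝ) * α)) := by
      apply Finset.filter_congr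
      intro j hj
      simp only [Finset.mem_Ico] at hj
      constructor <;> intro h
      · rcases lt_or_eq_of_le h with h | h
        · exact h
        · exact absurd (fract_mul_inj hα h) (by omega)
      · exact h.le
    rw [h3']
    rfl
  have hsumite : ∑ y ∈ S, (if thr α n ≤ y then (1 : ℤ) else 0)
      = ((S.filter (fun y => thr α n ≤ y)).card : ℤ) := by
    rw [Finset.sum_boole]
  rw [hsumite, hcount]
  push_cast
  ring
end

section
/- Let α ∈ (0,1/2) be irrational and let k ≥ 3 be an integer. Then B_α(k) − 2B_α(k−1) + B_α(k−2) equals 1−k if {kα} ∈ [0,α), equals k−1 if {kα} ∈ [α,2α), and equals 0 if {kα} ∈ [2α,1). -/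
lemma key (a b : ℝ) (hb : 0 < Int.fract b) :
    (if Int.fract a < Int.fract (a + b) then (1:ℤ) else 0)
      = 1 + ⌊a⌋ + ⌊b⌋ - ⌊a + b⌋ := by
  have hab : a + b = ((⌊a⌋ + ⌊b⌋ : ℤ) : ℝ) + (Int.fract a + Int.fract b) := by
    have h1 := Int.floor_add_fract a
    have h2 := Int.floor_add_fract b
    push_cast
    linarith
  have ha0 := Int.fract_nonneg a
  have ha1 := Int.fract_lt_one a
  have hb1 := Int.fract_lt_one b
  rcases lt_or_ge (Int.fract a + Int.fract b) 1 with h | h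
  · have hfl : ⌊a + b⌋ = ⌊a⌋ + ⌊b⌋ := by
      rw [hab, Int.floor_intCast_add, Int.floor_eq_zero_iff.mpr ⟨by linarith, h⟩, add_zero]
    have hfr : Int.fract (a + b) = Int.fract a + Int.fract b := by
      rw [← Int.self_sub_floor (a + b), hfl, hab]
      push_cast; ring
    rw [if_pos (by rw [hfr]; linarith), hfl]; ring
  · have hfl : ⌊a + b⌋ = ⌊a⌋ + ⌊b⌋ + 1 := by
      have h1 : ⌊Int.fract a + Int.fract b⌋ = 1 := by
        rw [Int.floor_eq_iff]
        constructor
        · exact_mod_cast h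
        · push_cast; linarith
      rw [hab, Int.floor_intCast_add, h1]
    have hfr : Int.fract (a + b) = Int.fract a + Int.fract b - 1 := by
      rw [← Int.self_sub_floor (a + b), hfl, hab]
      push_cast; ring
    rw [if_neg (by rw [hfr]; linarith), hfl]; ring

lemma fract_pos_of_irr (α : ℝ) (hα : Irrational α) (m : ℕ) (hm : m ≠ 0) :
    0 < Int.fract ((m : ℝ) * α) := by
  have hirr : Irrational ((m : ℝ) * α) := hα.natCast_mul hm
  rw [Int.fract_pos]
  exact fun hc => (hirr.ne_int _ hc).elim

lemma Bform (α : ℝ) (hα : Irrational α) (k : ℕ) (hk : 1 ≤ k) :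
    (B α k : ℤ) = (k - 1) * (1 - ⌊(k : ℝ) * α⌋)
      + 2 * ∑ q ∈ Finset.Ico 1 k, ⌊(q : ℝ) * α⌋ := by
  have hcard : (B α k : ℤ)
      = ∑ q ∈ Finset.Ico 1 k,
          (if Int.fract ((q : ℝ) * α) < Int.fract ((k : ℝ) * α) then (1:ℤ) else 0) := by
    unfold B
    rw [Finset.card_filter]
    push_cast
    rfl
  have hpt : ∀ q ∈ Finset.Ico 1 k,
      (if Int.fract ((q : ℝ) * α) < Int.fract ((k : ℝ) * α) then (1:ℤ) else 0)
        = 1 + ⌊(q : ℝ) * α⌋ + ⌊((k - q : ℕ) : ℝ) * α⌋ - ⌊(k : ℝ) * α⌋ := by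
    intro q hq
    rw [Finset.mem_Ico] at hq
    have hsum : (k : ℝ) * α = (q : ℝ) * α + ((k - q : ℕ) : ℝ) * α := by
      have : ((k - q : ℕ) : ℝ) = (k : ℝ) - q := by
        push_cast [Nat.cast_sub hq.2.le]; ring
      rw [this]; ring
    rw [hsum]
    exact key _ _ (fract_pos_of_irr α hα _ (by omega))
  rw [hcard, Finset.sum_congr rfl hpt]
  have hrefl : ∑ q ∈ Finset.Ico 1 k, ⌊((k - q : ℕ) : ℝ) * α⌋
      = ∑ q ∈ Finset.Ico 1 k, ⌊(q : ℝ) * α⌋ := by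
    apply Finset.sum_nbij' (fun q => k - q) (fun q => k - q)
    all_goals intro a ha <;> simp only [Finset.mem_Ico] at * <;> first
      | omega
      | (congr 2; omega)
  rw [Finset.sum_sub_distrib, Finset.sum_add_distrib, Finset.sum_add_distrib, hrefl]
  simp only [Finset.sum_const, Nat.card_Ico, nsmul_eq_mul, mul_one]
  rw [Nat.cast_sub hk]
  push_cast
  ring

lemma jump (α x : ℝ) (h0 : 0 < α) (h1 : α < 1) :
    (⌊x + α⌋ = ⌊x⌋ ∧ Int.fract (x + α) = Int.fract x + α) ∨
    (⌊x + α⌋ = ⌊x⌋ + 1 ∧ Int.fract (x + α) = Int.fract x + α - 1) := by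
  have e : Int.fract (x + α) = Int.fract x + α - ((⌊x + α⌋ : ℝ) - (⌊x⌋ : ℝ)) := by
    rw [← Int.self_sub_floor, ← Int.self_sub_floor]; ring
  have b1 := Int.fract_nonneg x
  have b2 := Int.fract_lt_one x
  have b3 := Int.fract_nonneg (x + α)
  have b4 := Int.fract_lt_one (x + α)
  have hlo : (-1 : ℝ) < ((⌊x + α⌋ - ⌊x⌋ : ℤ) : ℝ) := by push_cast; linarith
  have hhi : ((⌊x + α⌋ - ⌊x⌋ : ℤ) : ℝ) < 2 := by push_cast; linarith
  have hlo' : (-1 : ℤ) < ⌊x + α⌋ - ⌊x⌋ := by exact_mod_cast hlo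
  have hhi' : ⌊x + α⌋ - ⌊x⌋ < 2 := by exact_mod_cast hhi
  rcases (by omega : ⌊x + α⌋ = ⌊x⌋ ∨ ⌊x + α⌋ = ⌊x⌋ + 1) with h | h
  · left
    refine ⟨h, ?_⟩
    rw [e, h]; ring
  · right
    refine ⟨h, ?_⟩
    rw [e, h]; push_cast; ring

theorem stmt_5 (α : ℝ) (hα : Irrational α) (h0 : 0 < α) (h1 : α < 1/2)
    (k : ℕ) (hk : 3 ≤ k) :
    (Int.fract ((k : ℝ) * α) ∈ Set.Ico (0 : ℝ) α →
      (B α k : ℤ) - 2 * B α (k - 1) + B α (k - 2) = 1 - k) ∧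
    (Int.fract ((k : ℝ) * α) ∈ Set.Ico α (2 * α) →
      (B α k : ℤ) - 2 * B α (k - 1) + B α (k - 2) = k - 1) ∧
    (Int.fract ((k : ℝ) * α) ∈ Set.Ico (2 * α) 1 →
      (B α k : ℤ) - 2 * B α (k - 1) + B α (k - 2) = 0) := by
  obtain ⟨n, rfl⟩ : ∃ n, k = n + 3 := ⟨k - 3, by omega⟩
  have e1 : n + 3 - 1 = n + 2 := by omega
  have e2 : n + 3 - 2 = n + 1 := by omega
  rw [e1, e2]
  have hB3 := Bform α hα (n + 3) (by omega)
  have hB2 := Bform α hα (n + 2) (by omega)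
  have hB1 := Bform α hα (n + 1) (by omega)
  have hs3 : ∑ q ∈ Finset.Ico 1 (n + 3), ⌊(q : ℝ) * α⌋
      = (∑ q ∈ Finset.Ico 1 (n + 2), ⌊(q : ℝ) * α⌋) + ⌊((n + 2 : ℕ) : ℝ) * α⌋ :=
    Finset.sum_Ico_succ_top (by omega) _
  have hs2 : ∑ q ∈ Finset.Ico 1 (n + 2), ⌊(q : ℝ) * α⌋
      = (∑ q ∈ Finset.Ico 1 (n + 1), ⌊(q : ℝ) * α⌋) + ⌊((n + 1 : ℕ) : ℝ) * α⌋ :=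
    Finset.sum_Ico_succ_top (by omega) _
  have hL : (B α (n + 3) : ℤ) - 2 * B α (n + 2) + B α (n + 1)
      = -((n : ℤ) + 2) * (⌊((n + 3 : ℕ) : ℝ) * α⌋ - 2 * ⌊((n + 2 : ℕ) : ℝ) * α⌋
          + ⌊((n + 1 : ℕ) : ℝ) * α⌋) := by
    rw [hB3, hB2, hB1, hs3, hs2]
    push_cast
    ring
  have hx3 : ((n + 3 : ℕ) : ℝ) * α = ((n + 2 : ℕ) : ℝ) * α + α := by push_cast; ring
  have hx2 : ((n + 2 : ℕ) : ℝ) * α = ((n + 1 : ℕ) : ℝ) * α + α := by push_cast; ring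
  have J3 := jump α (((n + 2 : ℕ) : ℝ) * α) h0 (by linarith)
  have J2 := jump α (((n + 1 : ℕ) : ℝ) * α) h0 (by linarith)
  rw [← hx3] at J3
  rw [← hx2] at J2
  have p1 := fract_pos_of_irr α hα (n + 1) (by omega)
  have p2 := fract_pos_of_irr α hα (n + 2) (by omega)
  have p3 := fract_pos_of_irr α hα (n + 3) (by omega)
  have l1 := Int.fract_lt_one (((n + 1 : ℕ) : ℝ) * α)
  have l2 := Int.fract_lt_one (((n + 2 : ℕ) : ℝ) * α)
  have l3 := Int.fract_lt_one (((n + 3 : ℕ) : ℝ) * α)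
  refine ⟨?_, ?_, ?_⟩ <;> rintro ⟨hlo, hhi⟩ <;> rw [hL]
  · -- {kα} ∈ [0, α)
    rcases J3 with ⟨j3, f3⟩ | ⟨j3, f3⟩
    · exfalso; linarith
    rcases J2 with ⟨j2, f2⟩ | ⟨j2, f2⟩
    · rw [j3, j2]; push_cast; ring
    · exfalso; linarith
  · -- {kα} ∈ [α, 2α)
    rcases J3 with ⟨j3, f3⟩ | ⟨j3, f3⟩
    swap
    · exfalso; linarith
    rcases J2 with ⟨j2, f2⟩ | ⟨j2, f2⟩
    · exfalso; linarith
    · rw [j3, j2]; push_cast; ring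
  · -- {kα} ∈ [2α, 1)
    rcases J3 with ⟨j3, f3⟩ | ⟨j3, f3⟩
    swap
    · exfalso; linarith
    rcases J2 with ⟨j2, f2⟩ | ⟨j2, f2⟩
    · rw [j3, j2]; push_cast; ring
    · exfalso; linarith
end

section
/- Let α ∈ (0,1) be irrational and let k be an odd positive integer. Then B_α(k) is even. -/
lemma key_pair (α : ℝ) (hα : Irrational α) {k q : ℕ} (hq1 : 1 ≤ q) (hqk : q < k)
    (h : Int.fract ((q : ℝ) * α) < Int.fract ((k : ℝ) * α)) :
    Int.fract (((k - q : ℕ) : ℝ) * α) < Int.fract ((k : ℝ) * α) := by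
  have hcast : ((k - q : ℕ) : ℝ) = (k : ℝ) - q := by
    push_cast [Nat.cast_sub hqk.le]; ring
  set a := Int.fract ((q : ℝ) * α) with ha
  set b := Int.fract (((k - q : ℕ) : ℝ) * α) with hb
  set c := Int.fract ((k : ℝ) * α) with hc
  have ha0 : 0 < a := by
    rcases lt_or_eq_of_le (Int.fract_nonneg ((q : ℝ) * α)) with h' | h'
    · exact h'
    · exfalso
      have : Irrational ((q : ℝ) * α) := hα.natCast_mul (by omega)
      have : Irrational a := by
        rw [ha, Int.fract]
        exact this.sub_intCast _
      exact this.ne_zero h'.symm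
  have hb1 : b < 1 := Int.fract_lt_one _
  have hsum : c = Int.fract (a + b) := by
    rw [ha, hb, hc, Int.fract_eq_fract]
    refine ⟨⌊(q : ℝ) * α⌋ + ⌊((k - q : ℕ) : ℝ) * α⌋, ?_⟩
    push_cast
    rw [hcast, Int.fract, Int.fract]
    ring
  by_cases hab : a + b < 1
  · have : c = a + b := by
      have h0b : 0 ≤ b := Int.fract_nonneg _
      rw [hsum, Int.fract_eq_self.2 ⟨by linarith, hab⟩]
    rw [this]
    linarith
  · have ha1 : a < 1 := Int.fract_lt_one _
    have heq : Int.fract (a + b) = Int.fract (a + b - 1) := by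
      rw [Int.fract_eq_fract]; exact ⟨1, by push_cast; ring⟩
    have : c = a + b - 1 := by
      rw [hsum, heq, Int.fract_eq_self.2 ⟨by linarith, by linarith⟩]
    rw [this] at h
    linarith

theorem stmt_6 (α : ℝ) (hα : Irrational α) (h0 : 0 < α) (h1 : α < 1)
    (k : ℕ) (hk : 1 ≤ k) (hodd : Odd k) :
    Even (B α k) := by
  classical
  set s := ((Finset.Ico 1 k).filter
    (fun q : ℕ => Int.fract ((q : ℝ) * α) < Int.fract ((k : ℝ) * α))) with hs
  have hmem : ∀ q ∈ s, k - q ∈ s := by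
    intro q hq
    rw [hs, Finset.mem_filter, Finset.mem_Ico] at hq ⊢
    obtain ⟨⟨h1q, hqk⟩, hlt⟩ := hq
    exact ⟨⟨by omega, by omega⟩, key_pair α hα h1q hqk hlt⟩
  have hsum : (∑ _x ∈ s, (1 : ZMod 2)) = 0 := by
    apply Finset.sum_involution (fun q _ => k - q)
    · intro a _; decide
    · intro a ha _
      rw [hs, Finset.mem_filter, Finset.mem_Ico] at ha
      rcases hodd with ⟨m, hm⟩
      omega
    · exact hmem
    · intro a ha
      rw [hs, Finset.mem_filter, Finset.mem_Ico] at ha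
      omega
  rw [Finset.sum_const, nsmul_eq_mul, mul_one] at hsum
  have : (2 : ℕ) ∣ s.card := (ZMod.natCast_eq_zero_iff _ _).1 hsum
  exact even_iff_two_dvd.2 this
end

section
/- Let α ∈ (0,1) be irrational and let k be an even positive integer. Then B_α(k) ≡ ⌊kα⌋ + 1 (mod 2). -/
lemma even_card_invol (f : ℕ → ℕ) : ∀ n (t : Finset ℕ), t.card = n →
    (∀ a ∈ t, f a ∈ t) → (∀ a ∈ t, f (f a) = a) → (∀ a ∈ t, f a ≠ a) → Even t.card := by
  intro n
  induction n using Nat.strong_induction_on with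
  | _ n ih =>
    intro t hcard h1 h2 h3
    rcases t.eq_empty_or_nonempty with rfl | ⟨a, ha⟩
    · simp
    · have hfa := h1 a ha
      have hne := h3 a ha
      set t' := (t.erase a).erase (f a) with ht'
      have hmem : ∀ b, b ∈ t' ↔ b ∈ t ∧ b ≠ a ∧ b ≠ f a := by
        intro b; simp [ht', Finset.mem_erase]; tauto
      have hfa' : f a ∈ t.erase a := Finset.mem_erase.mpr ⟨hne, hfa⟩
      have htwo : 1 < t.card := Finset.one_lt_card.mpr ⟨a, ha, f a, hfa, Ne.symm hne⟩
      have hc' : t'.card + 2 = t.card := by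
        rw [ht', Finset.card_erase_of_mem hfa', Finset.card_erase_of_mem ha]
        omega
      have h1' : ∀ b ∈ t', f b ∈ t' := by
        intro b hb
        rw [hmem] at hb ⊢
        refine ⟨h1 b hb.1, ?_, ?_⟩
        · intro h
          have : f (f b) = f a := by rw [h]
          rw [h2 b hb.1] at this
          exact hb.2.2 this
        · intro h
          have : f (f b) = f (f a) := by rw [h]
          rw [h2 b hb.1, h2 a ha] at this
          exact hb.2.1 this
      have h2' : ∀ b ∈ t', f (f b) = b := fun b hb => h2 b ((hmem b).mp hb).1
      have h3' : ∀ b ∈ t', f b ≠ b := fun b hb => h3 b ((hmem b).mp hb).1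
      have hEven : Even t'.card := ih t'.card (by omega) t' rfl h1' h2' h3'
      have : Even (t'.card + 2) := hEven.add (by decide)
      rwa [hc'] at this

theorem stmt_7 (α : ℝ) (hα : Irrational α) (h0 : 0 < α) (h1 : α < 1)
    (k : ℕ) (hk : 1 ≤ k) (heven : Even k) :
    (B α k : ℤ) ≡ ⌊(k : ℝ) * α⌋ + 1 [ZMOD 2] := by
  obtain ⟨m, hm⟩ := heven
  have hm1 : 1 ≤ m := by omega
  -- basic facts about fractional parts
  have hirr : ∀ n : ℕ, 1 ≤ n → Irrational ((n : ℝ) * α) := by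
    intro n hn
    exact_mod_cast hα.natCast_mul (by omega)
  have hpos : ∀ n : ℕ, 1 ≤ n → 0 < Int.fract ((n : ℝ) * α) := by
    intro n hn
    exact Int.fract_pos.mpr ((hirr n hn).ne_int _)
  have hlt1 : ∀ x : ℝ, Int.fract x < 1 := fun x => Int.fract_lt_one x
  set S := (Finset.Ico 1 k).filter (fun q : ℕ => Int.fract ((q : ℝ) * α) < Int.fract ((k : ℝ) * α)) with hS
  -- the key pairing property
  have key : ∀ q, 1 ≤ q → q < k →
      Int.fract ((q : ℝ) * α) < Int.fract ((k : ℝ) * α) →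
      Int.fract (((k - q : ℕ) : ℝ) * α) < Int.fract ((k : ℝ) * α) := by
    intro q hq1 hqk hqS
    set x := Int.fract ((q : ℝ) * α) with hx
    set y := Int.fract (((k - q : ℕ) : ℝ) * α) with hy
    set c := Int.fract ((k : ℝ) * α) with hc
    have hx0 : 0 < x := hpos q hq1
    have hy0 : 0 < y := hpos (k - q) (by omega)
    have hy1 : y < 1 := hlt1 _
    have hc1 : c < 1 := hlt1 _
    have hc0 : 0 ≤ c := Int.fract_nonneg _
    have hsum : (q : ℝ) * α + ((k - q : ℕ) : ℝ) * α = (k : ℝ) * α := by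
      have : ((k - q : ℕ) : ℝ) = (k : ℝ) - (q : ℝ) := by
        push_cast [Nat.cast_sub hqk.le]; ring
      rw [this]; ring
    set z : ℤ := ⌊(k : ℝ) * α⌋ - ⌊(q : ℝ) * α⌋ - ⌊((k - q : ℕ) : ℝ) * α⌋ with hz
    have hczxy : c = x + y - (z : ℝ) := by
      simp only [hc, hx, hy, hz, Int.fract]
      push_cast
      rw [← hsum]
      ring
    have hz01 : z = 0 ∨ z = 1 := by
      have hzlt : (z : ℝ) < 2 := by nlinarith
      have hzgt : (-1 : ℝ) < (z : ℝ) := by nlinarith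
      have h2' : z < 2 := by exact_mod_cast hzlt
      have h1' : (-1 : ℤ) < z := by exact_mod_cast hzgt
      omega
    rcases hz01 with h | h
    · -- c = x + y, so y = c - x < c
      rw [h] at hczxy
      push_cast at hczxy
      linarith
    · -- c = x + y - 1 : contradicts x < c
      rw [h] at hczxy
      push_cast at hczxy
      linarith
  have hmemS : ∀ q, q ∈ S ↔ 1 ≤ q ∧ q < k ∧ Int.fract ((q : ℝ) * α) < Int.fract ((k : ℝ) * α) := by
    intro q; rw [hS, Finset.mem_filter, Finset.mem_Ico]; tauto
  -- pairing on S.erase m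
  have hEven : Even ((S.erase m).card) := by
    apply even_card_invol (fun q => k - q) _ _ rfl
    · intro a ha
      rw [Finset.mem_erase, hmemS] at ha ⊢
      obtain ⟨ham, ha1, hak, haP⟩ := ha
      refine ⟨by omega, by omega, by omega, key a ha1 hak haP⟩
    · intro a ha
      rw [Finset.mem_erase, hmemS] at ha
      omega
    · intro a ha
      rw [Finset.mem_erase, hmemS] at ha
      omega
  -- card of S in terms of m
  have hcardS : S.card % 2 = (if m ∈ S then 1 else 0) % 2 := by
    by_cases hmS : m ∈ S
    · have := Finset.card_erase_of_mem hmS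
      obtain ⟨r, hr⟩ := hEven
      have hpos' : 0 < S.card := Finset.card_pos.mpr ⟨m, hmS⟩
      simp only [hmS, if_pos]
      omega
    · rw [Finset.erase_eq_of_notMem hmS] at hEven
      obtain ⟨r, hr⟩ := hEven
      simp only [hmS, if_neg, if_false]
      omega
  -- now analyze m ∈ S and the parity of the floor
  set F : ℤ := ⌊(m : ℝ) * α⌋ with hF
  set x := Int.fract ((m : ℝ) * α) with hx
  have hx0 : 0 < x := hpos m hm1
  have hx1 : x < 1 := hlt1 _
  have hxirr : Irrational x := by
    rw [hx, ← Int.self_sub_floor]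
    exact (hirr m hm1).sub_intCast _
  have hxhalf : x ≠ 1 / 2 := by
    intro h
    exact hxirr ⟨(1 / 2 : ℚ), by rw [h]; norm_num⟩
  have hkα : (k : ℝ) * α = ((2 * F : ℤ) : ℝ) + 2 * x := by
    have hmx : (m : ℝ) * α = (F : ℝ) + x := by rw [hx, Int.fract]; ring
    have : (k : ℝ) = 2 * (m : ℝ) := by rw [hm]; push_cast; ring
    rw [this]; push_cast; nlinarith [hmx]
  have hfloor : ⌊(k : ℝ) * α⌋ = 2 * F + ⌊(2 : ℝ) * x⌋ := by
    rw [hkα, Int.floor_intCast_add]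
  have hfract : Int.fract ((k : ℝ) * α) = Int.fract ((2 : ℝ) * x) := by
    rw [hkα, Int.fract_intCast_add]
  -- split on x < 1/2
  rcases lt_or_gt_of_ne hxhalf with hhalf | hhalf
  · -- x < 1/2 : floor kα even, m ∈ S
    have hf0 : ⌊(2 : ℝ) * x⌋ = 0 := by
      rw [Int.floor_eq_zero_iff]
      constructor <;> [linarith; linarith]
    have hfr : Int.fract ((2 : ℝ) * x) = 2 * x := by
      rw [Int.fract_eq_self.mpr ⟨by linarith, by linarith⟩]
    have hmS : m ∈ S := by
      rw [hmemS]
      exact ⟨hm1, by omega, by rw [← hx, hfract, hfr]; linarith⟩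
    show (B α k : ℤ) % 2 = (⌊(k : ℝ) * α⌋ + 1) % 2
    have hB : B α k = S.card := rfl
    rw [hB, hfloor, hf0]
    simp only [hmS, if_pos] at hcardS
    omega
  · -- x > 1/2 : floor kα odd, m ∉ S
    have hf0 : ⌊(2 : ℝ) * x⌋ = 1 := by
      rw [Int.floor_eq_iff]
      push_cast
      constructor <;> linarith
    have hfr : Int.fract ((2 : ℝ) * x) = 2 * x - 1 := by
      simp only [Int.fract, hf0]; push_cast; ring
    have hmS : m ∉ S := by
      rw [hmemS]
      rintro ⟨-, -, h⟩
      rw [← hx, hfract, hfr] at h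
      linarith
    show (B α k : ℤ) % 2 = (⌊(k : ℝ) * α⌋ + 1) % 2
    have hB : B α k = S.card := rfl
    rw [hB, hfloor, hf0]
    simp only [hmS, if_neg, if_false] at hcardS
    omega
end

section
/- Let α ∈ (0,1/2) be irrational and let k ≥ 3 be an integer. Then B_α(k) ≡ B_α(k−2) + ε (mod 2), where ε = 1 if k is even and {kα} < 2α, and ε = 0 otherwise. -/
open Finset

lemma card_parity (s : Finset ℕ) (f : ℕ → ℕ) (hmem : ∀ a ∈ s, f a ∈ s)
    (hinv : ∀ a ∈ s, f (f a) = a) :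
    ((s.card : ZMod 2)) = (((s.filter fun a => f a = a)).card : ZMod 2) := by
  classical
  have hsplit : (s.filter fun a => f a = a).card + (s.filter fun a => ¬ f a = a).card = s.card :=
    Finset.card_filter_add_card_filter_not _
  have h0 : (((s.filter fun a => ¬ f a = a).card : ZMod 2)) = 0 := by
    have hsum : ∑ _x ∈ (s.filter fun a => ¬ f a = a), (1 : ZMod 2) = 0 := by
      apply Finset.sum_involution (g := fun a _ => f a)
      · intro a ha; decide
      · intro a ha _
        exact (Finset.mem_filter.mp ha).2
      · intro a ha
        have has := Finset.mem_filter.mp ha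
        refine Finset.mem_filter.mpr ⟨hmem _ has.1, ?_⟩
        rw [hinv _ has.1]
        exact fun h => has.2 h.symm
      · intro a ha; exact hinv _ (Finset.mem_filter.mp ha).1
    simpa using hsum
  rw [← hsplit]
  push_cast
  rw [h0, add_zero]

lemma fract_irr (α : ℝ) (hα : Irrational α) {n : ℕ} (hn : n ≠ 0) :
    Irrational (Int.fract ((n : ℝ) * α)) := by
  rw [← Int.self_sub_floor]
  exact (hα.natCast_mul hn).sub_intCast _

lemma fract_pos' (α : ℝ) (hα : Irrational α) {n : ℕ} (hn : n ≠ 0) :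
    0 < Int.fract ((n : ℝ) * α) := by
  refine lt_of_le_of_ne (Int.fract_nonneg _) ?_
  have := (fract_irr α hα hn).ne_int 0
  simpa using this.symm

lemma flip_mem (α : ℝ) (hα : Irrational α) (k : ℕ) :
    ∀ q ∈ (Finset.Ico 1 k).filter
      (fun q : ℕ => Int.fract ((q : ℝ) * α) < Int.fract ((k : ℝ) * α)),
      k - q ∈ (Finset.Ico 1 k).filter
      (fun q : ℕ => Int.fract ((q : ℝ) * α) < Int.fract ((k : ℝ) * α)) := by
  intro q hq
  obtain ⟨hq1, hlt⟩ := Finset.mem_filter.mp hq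
  obtain ⟨h1, h2⟩ := Finset.mem_Ico.mp hq1
  have hx0 : 0 < Int.fract ((q : ℝ) * α) := fract_pos' α hα (by omega)
  have hy1 : Int.fract ((k : ℝ) * α) < 1 := Int.fract_lt_one _
  have key : Int.fract (((k - q : ℕ) : ℝ) * α) =
      Int.fract ((k : ℝ) * α) - Int.fract ((q : ℝ) * α) := by
    have hc : ((k - q : ℕ) : ℝ) = (k : ℝ) - q := by
      push_cast [Nat.cast_sub h2.le]; ring
    have hrw : ((k : ℝ) - q) * α =
        (Int.fract ((k : ℝ) * α) - Int.fract ((q : ℝ) * α)) +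
          ((⌊(k : ℝ) * α⌋ - ⌊(q : ℝ) * α⌋ : ℤ) : ℝ) := by
      rw [← Int.self_sub_floor, ← Int.self_sub_floor]; push_cast; ring
    rw [hc, hrw, Int.fract_add_intCast]
    exact Int.fract_eq_self.mpr ⟨by linarith, by linarith⟩
  refine Finset.mem_filter.mpr ⟨Finset.mem_Ico.mpr ⟨by omega, by omega⟩, ?_⟩
  rw [key]
  linarith

lemma B_zmod (α : ℝ) (hα : Irrational α) (k : ℕ) :
    (B α k : ZMod 2) = ((((Finset.Ico 1 k).filter
      (fun q : ℕ => Int.fract ((q : ℝ) * α) < Int.fract ((k : ℝ) * α))).filter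
      (fun a => k - a = a)).card : ZMod 2) := by
  apply card_parity _ (fun q => k - q) (flip_mem α hα k)
  intro a ha
  have := Finset.mem_Ico.mp (Finset.mem_filter.mp ha).1
  omega

lemma B_odd (α : ℝ) (hα : Irrational α) {k : ℕ} (hk : Odd k) :
    (B α k : ZMod 2) = 0 := by
  rw [B_zmod α hα k]
  obtain ⟨j, rfl⟩ := hk
  have : (((Finset.Ico 1 (2*j+1)).filter
      (fun q : ℕ => Int.fract ((q : ℝ) * α) < Int.fract (((2*j+1 : ℕ) : ℝ) * α))).filter
      (fun a => 2*j+1 - a = a)) = ∅ := by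
    ext q
    simp only [Finset.mem_filter, Finset.mem_Ico, Finset.notMem_empty, iff_false, not_and]
    intro ⟨⟨hq1, hq2⟩, _⟩
    omega
  rw [this]
  simp

lemma B_even (α : ℝ) (hα : Irrational α) (m : ℕ) (hm : 1 ≤ m) :
    (B α (2 * m) : ZMod 2) =
      if Int.fract ((m : ℝ) * α) < Int.fract (((2 * m : ℕ) : ℝ) * α) then 1 else 0 := by
  rw [B_zmod α hα (2 * m)]
  have hset : (((Finset.Ico 1 (2*m)).filter
      (fun q : ℕ => Int.fract ((q : ℝ) * α) < Int.fract (((2*m : ℕ) : ℝ) * α))).filter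
      (fun a => 2*m - a = a)) =
      if Int.fract ((m : ℝ) * α) < Int.fract (((2 * m : ℕ) : ℝ) * α) then {m} else ∅ := by
    ext q
    by_cases hc : Int.fract ((m : ℝ) * α) < Int.fract (((2 * m : ℕ) : ℝ) * α)
    · rw [if_pos hc]
      simp only [Finset.mem_filter, Finset.mem_Ico, Finset.mem_singleton]
      constructor
      · rintro ⟨⟨⟨hq1, hq2⟩, _⟩, hfix⟩; omega
      · rintro rfl
        exact ⟨⟨⟨by omega, by omega⟩, hc⟩, by omega⟩
    · rw [if_neg hc]
      simp only [Finset.mem_filter, Finset.mem_Ico, Finset.notMem_empty, iff_false, not_and]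
      intro ⟨⟨hq1, hq2⟩, hlt⟩ hfix
      have : q = m := by omega
      subst this
      exact hc hlt
  rw [hset]
  split_ifs <;> simp

lemma fract_double (x : ℝ) (hne : Int.fract x ≠ 1/2) :
    Int.fract (2 * x) =
      if Int.fract x < 1/2 then 2 * Int.fract x else 2 * Int.fract x - 1 := by
  have h0 : 0 ≤ Int.fract x := Int.fract_nonneg x
  have h1 : Int.fract x < 1 := Int.fract_lt_one x
  have hrw : 2 * x = 2 * Int.fract x + ((2 * ⌊x⌋ : ℤ) : ℝ) := by
    rw [← Int.self_sub_floor]; push_cast; ring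
  rw [hrw, Int.fract_add_intCast]
  split_ifs with h
  · exact Int.fract_eq_self.mpr ⟨by linarith, by linarith⟩
  · have h' : 1/2 < Int.fract x := lt_of_le_of_ne (not_lt.mp h) (Ne.symm hne)
    rw [show Int.fract (2 * Int.fract x) = Int.fract (2 * Int.fract x - ((1 : ℤ) : ℝ)) from
      (Int.fract_sub_intCast _ _).symm]
    push_cast
    exact Int.fract_eq_self.mpr ⟨by linarith, by linarith⟩

lemma fract_add' (x y : ℝ) (hy0 : 0 ≤ y) (hy1 : y < 1) (hne : Int.fract x + y ≠ 1) :
    Int.fract (x + y) =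
      if Int.fract x + y < 1 then Int.fract x + y else Int.fract x + y - 1 := by
  have h0 : 0 ≤ Int.fract x := Int.fract_nonneg x
  have h1 : Int.fract x < 1 := Int.fract_lt_one x
  have hrw : x + y = (Int.fract x + y) + ((⌊x⌋ : ℤ) : ℝ) := by
    rw [← Int.self_sub_floor]; push_cast; ring
  rw [hrw, Int.fract_add_intCast]
  split_ifs with h
  · exact Int.fract_eq_self.mpr ⟨by linarith, by linarith⟩
  · have h' : 1 < Int.fract x + y := lt_of_le_of_ne (not_lt.mp h) (Ne.symm hne)
    rw [show Int.fract (Int.fract x + y) = Int.fract (Int.fract x + y - ((1 : ℤ) : ℝ)) from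
      (Int.fract_sub_intCast _ _).symm]
    push_cast
    exact Int.fract_eq_self.mpr ⟨by linarith, by linarith⟩

set_option maxHeartbeats 1000000 in
theorem stmt_8 (α : ℝ) (hα : Irrational α) (h0 : 0 < α) (h1 : α < 1/2)
    (k : ℕ) (hk : 3 ≤ k) :
    B α k ≡ B α (k - 2) +
      (if Even k ∧ Int.fract ((k : ℝ) * α) < 2 * α then 1 else 0) [MOD 2] := by
  have := h0
  apply (ZMod.natCast_eq_natCast_iff _ _ _).mp
  push_cast
  rcases Nat.even_or_odd k with he | ho
  · -- even case
    obtain ⟨n, hn1, rfl⟩ : ∃ n, 1 ≤ n ∧ k = 2 * (n + 1) := by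
      obtain ⟨m, hm⟩ := he
      exact ⟨m - 1, by omega, by omega⟩
    have hsub : 2 * (n + 1) - 2 = 2 * n := by omega
    rw [hsub, B_even α hα (n + 1) (by omega), B_even α hα n hn1]
    have hE : Even (2 * (n + 1)) := even_two_mul _
    simp only [hE, true_and]
    -- irrationality facts
    have hirr_t : Irrational (Int.fract ((n : ℝ) * α)) := fract_irr α hα (by omega)
    have hirr_s : Irrational (Int.fract (((n + 1 : ℕ) : ℝ) * α)) := fract_irr α hα (by omega)
    have ht_ne : Int.fract ((n : ℝ) * α) ≠ 1/2 := by
      have := hirr_t.ne_rat (1/2); simpa using this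
    have hs_ne : Int.fract (((n + 1 : ℕ) : ℝ) * α) ≠ 1/2 := by
      have := hirr_s.ne_rat (1/2); simpa using this
    have hne1 : Int.fract ((n : ℝ) * α) + α ≠ 1 := by
      have heq : Int.fract ((n : ℝ) * α) + α = ((n + 1 : ℕ) : ℝ) * α - ((⌊(n : ℝ) * α⌋ : ℤ) : ℝ) := by
        rw [← Int.self_sub_floor]; push_cast; ring
      rw [heq]
      have := ((hα.natCast_mul (show (n + 1 : ℕ) ≠ 0 by omega)).sub_intCast ⌊(n : ℝ) * α⌋).ne_int 1
      simpa using this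
    have e2 : ((2 * (n + 1) : ℕ) : ℝ) * α = 2 * (((n + 1 : ℕ) : ℝ) * α) := by push_cast; ring
    have e1 : ((2 * n : ℕ) : ℝ) * α = 2 * ((n : ℝ) * α) := by push_cast; ring
    have e3 : ((n + 1 : ℕ) : ℝ) * α = (n : ℝ) * α + α := by push_cast; ring
    rw [e2, e1, fract_double _ hs_ne, fract_double _ ht_ne, e3,
      fract_add' _ _ h0.le (by linarith) hne1]
    have h0t : 0 < Int.fract ((n : ℝ) * α) := fract_pos' α hα (by omega)
    have h1t : Int.fract ((n : ℝ) * α) < 1 := Int.fract_lt_one _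
    rcases lt_or_gt_of_ne hne1 with hc | hc <;>
      split_ifs <;> first | decide | (exfalso; linarith)
  · -- odd case
    have ho2 : Odd (k - 2) := by
      obtain ⟨j, rfl⟩ := ho; exact ⟨j - 1, by omega⟩
    rw [B_odd α hα ho, B_odd α hα ho2]
    rw [if_neg (by simp [Nat.not_even_iff_odd.mpr ho])]
    simp
end

section
/- Let α ∈ (1/2,1) be irrational and let k be a positive integer. Then B_α(k) ≡ B_{1−α}(k) + ε (mod 2), where ε = 1 if k is even and ε = 0 if k is odd. -/
theorem stmt_9 (α : ℝ) (hα : Irrational α) (h0 : 1/2 < α) (h1 : α < 1)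
    (k : ℕ) (hk : 1 ≤ k) :
    B α k ≡ B (1 - α) k + (if Even k then 1 else 0) [MOD 2] := by
  have hfr : ∀ n : ℕ, 1 ≤ n → Int.fract ((n:ℝ)*(1-α)) = 1 - Int.fract ((n:ℝ)*α) := by
    intro n hn
    have hirr : Irrational ((n:ℝ)*α) := hα.natCast_mul (by omega)
    have hne : Int.fract ((n:ℝ)*α) ≠ 0 := by
      intro h
      rw [Int.fract] at h
      exact hirr.ne_int ⌊(n:ℝ)*α⌋ (by linarith)
    have he : (n:ℝ)*(1-α) = -((n:ℝ)*α) + n := by ring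
    rw [he, Int.fract_add_natCast, Int.fract_neg hne]
  have hne2 : ∀ q ∈ Finset.Ico 1 k, Int.fract ((q:ℝ)*α) ≠ Int.fract ((k:ℝ)*α) := by
    intro q hq h
    rw [Int.fract_eq_fract] at h
    obtain ⟨z, hz⟩ := h
    rw [Finset.mem_Ico] at hq
    have hqk : (q:ℝ)*α - (k:ℝ)*α = (((q:ℤ) - k : ℤ):ℝ) * α := by push_cast; ring
    have hirr : Irrational ((((q:ℤ) - k : ℤ):ℝ) * α) := hα.intCast_mul (by omega)
    exact hirr.ne_int z (by rw [← hqk, hz])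
  have hsum : B α k + B (1-α) k = k - 1 := by
    unfold B
    have : (Finset.Ico 1 k).filter
        (fun q : ℕ => Int.fract ((q : ℝ) * (1-α)) < Int.fract ((k : ℝ) * (1-α)))
      = (Finset.Ico 1 k).filter
        (fun q : ℕ => ¬ (Int.fract ((q : ℝ) * α) < Int.fract ((k : ℝ) * α))) := by
      apply Finset.filter_congr
      intro q hq
      rw [Finset.mem_Ico] at hq
      rw [hfr q hq.1, hfr k hk]
      constructor
      · intro h; simp only [not_lt]; linarith
      · intro h
        simp only [not_lt] at h
        have := hne2 q (by rw [Finset.mem_Ico]; exact hq)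
        have hlt : Int.fract ((k:ℝ)*α) < Int.fract ((q:ℝ)*α) := lt_of_le_of_ne h (Ne.symm this)
        linarith
    rw [this, Finset.card_filter_add_card_filter_not, Nat.card_Ico]
  rcases Nat.even_or_odd k with he | ho
  · rw [if_pos he]; rw [Nat.even_iff] at he
    unfold Nat.ModEq; omega
  · rw [if_neg (Nat.not_even_iff_odd.mpr ho)]; rw [Nat.odd_iff] at ho
    unfold Nat.ModEq; omega
end

section
/- Let α ∈ (0,1) be irrational and let n be a positive integer. Then 1 + B_α(n) + (n+1)⌊nα⌋ ≡ n (mod 2). -/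
lemma key_aux (α : ℝ) (hα : Irrational α) {n q : ℕ} (hq : q ∈ Finset.Ico 1 n) :
    (⌊((n - q : ℕ) : ℝ) * α⌋ : ℤ) =
      ⌊(n : ℝ) * α⌋ - 1 +
        (if Int.fract ((q : ℝ) * α) < Int.fract ((n : ℝ) * α) then (1 : ℤ) else 0) -
        ⌊(q : ℝ) * α⌋ := by
  rw [Finset.mem_Ico] at hq
  obtain ⟨hq1, hq2⟩ := hq
  have hqn : q ≤ n := hq2.le
  have hcast : ((n - q : ℕ) : ℝ) = (n : ℝ) - q := by
    push_cast [hqn]; ring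
  rw [hcast]
  set x : ℝ := (q : ℝ) * α with hx
  set y : ℝ := ((n : ℝ) - q) * α with hy
  have hxy : x + y = (n : ℝ) * α := by rw [hx, hy]; ring
  have hyirr : Irrational y := by
    have h1 : y = ((n - q : ℕ) : ℝ) * α := by rw [hcast]
    rw [h1]
    exact hα.natCast_mul (by omega)
  -- b ≠ 0
  have hb : Int.fract y ≠ 0 := by
    intro h
    have : y = (⌊y⌋ : ℝ) := by
      have := Int.fract_add_floor y
      rw [h] at this; linarith
    exact hyirr.ne_int ⌊y⌋ this
  -- a ≠ c
  have hac : Int.fract x ≠ Int.fract (x + y) := by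
    intro h
    obtain ⟨z, hz⟩ := Int.fract_eq_fract.mp h
    have : y = ((-z : ℤ) : ℝ) := by push_cast; linarith
    exact hyirr.ne_int _ this
  have hfx := Int.fract_nonneg x
  have hfx' := Int.fract_lt_one x
  have hfy := Int.fract_nonneg y
  have hfy' := Int.fract_lt_one y
  have hfc := Int.fract_nonneg (x + y)
  have hfc' := Int.fract_lt_one (x + y)
  have hsum : (⌊x⌋ : ℝ) + Int.fract x + (⌊y⌋ + Int.fract y)
      = ⌊x + y⌋ + Int.fract (x + y) := by
    rw [Int.floor_add_fract, Int.floor_add_fract, Int.floor_add_fract]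
  set m : ℤ := ⌊x + y⌋ - ⌊x⌋ - ⌊y⌋ with hm
  have hmr : (m : ℝ) = Int.fract x + Int.fract y - Int.fract (x + y) := by
    push_cast [hm]; linarith
  have hm01 : m = 0 ∨ m = 1 := by
    have h1 : (-1 : ℝ) < m := by rw [hmr]; linarith
    have h2 : (m : ℝ) < 2 := by rw [hmr]; linarith
    have h1' : (-1 : ℤ) < m := by exact_mod_cast h1
    have h2' : m < 2 := by exact_mod_cast h2
    omega
  rw [← hxy]
  rcases hm01 with h | h
  · -- no carry: fract x + fract y = fract (x+y), fract y > 0 so fract x < fract (x+y)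
    have hlt : Int.fract x < Int.fract (x + y) := by
      rw [h] at hmr
      have hb' : 0 < Int.fract y := lt_of_le_of_ne hfy (Ne.symm hb)
      push_cast at hmr
      linarith
    rw [if_pos hlt]
    omega
  · have hgt : ¬ Int.fract x < Int.fract (x + y) := by
      rw [h] at hmr
      push_cast at hmr
      intro hlt
      linarith
    rw [if_neg hgt]
    omega

theorem stmt_13 (α : ℝ) (hα : Irrational α) (h0 : 0 < α) (h1 : α < 1)
    (n : ℕ) (hn : 1 ≤ n) :
    (1 + (B α n : ℤ) + ((n : ℤ) + 1) * ⌊(n : ℝ) * α⌋) ≡ (n : ℤ) [ZMOD 2] := by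
  set F : ℤ := ⌊(n : ℝ) * α⌋ with hF
  set S : ℤ := ∑ q ∈ Finset.Ico 1 n, ⌊(q : ℝ) * α⌋ with hS
  -- reflection: sum over mirrored indices equals S
  have hrefl : ∑ q ∈ Finset.Ico 1 n, (⌊((n - q : ℕ) : ℝ) * α⌋ : ℤ) = S := by
    rw [hS]
    refine Finset.sum_nbij' (fun q => n - q) (fun q => n - q)
      (fun a ha => ?_) (fun a ha => ?_) (fun a ha => ?_) (fun a ha => ?_) (fun a ha => rfl)
    · simp only [Finset.mem_Ico] at ha ⊢; omega
    · simp only [Finset.mem_Ico] at ha ⊢; omega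
    · simp only [Finset.mem_Ico] at ha; show n - (n - a) = a; omega
    · simp only [Finset.mem_Ico] at ha; show n - (n - a) = a; omega
  -- sum the key identity
  have hsum := Finset.sum_congr rfl (fun q hq => key_aux α hα (n := n) hq)
  rw [hrefl] at hsum
  have hcard : ((Finset.Ico 1 n).card : ℤ) = (n : ℤ) - 1 := by
    rw [Nat.card_Ico]; omega
  have hBval : (B α n : ℤ)
      = ((Finset.Ico 1 n).filter
          (fun q : ℕ => Int.fract ((q : ℝ) * α) < Int.fract ((n : ℝ) * α))).card := by
    rw [B]
  have hsum3 : ∑ q ∈ Finset.Ico 1 n,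
      ((⌊(n : ℝ) * α⌋ - 1 + if Int.fract ((q : ℝ) * α) < Int.fract ((n : ℝ) * α)
        then (1 : ℤ) else 0) - ⌊(q : ℝ) * α⌋)
      = ((n : ℤ) - 1) * (F - 1) + (B α n : ℤ) - S := by
    rw [Finset.sum_sub_distrib, Finset.sum_add_distrib, Finset.sum_const, Finset.sum_boole]
    rw [hBval, ← hS]
    try rw [nsmul_eq_mul]
    try rw [hcard]
    try rw [← hF]
    try push_cast
    try ring
  have hsum2 := hsum.trans hsum3
  have hB2 : (B α n : ℤ) = 2 * S - ((n : ℤ) - 1) * (F - 1) := by linarith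
  have hkey : (1 + (B α n : ℤ) + ((n : ℤ) + 1) * F) - (n : ℤ) = 2 * (S + F) := by
    rw [hB2]; ring
  have hdvd : (2 : ℤ) ∣ ((n : ℤ) - (1 + (B α n : ℤ) + ((n : ℤ) + 1) * F)) :=
    ⟨-(S + F), by linarith⟩
  exact Int.modEq_iff_dvd.mpr hdvd
end
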